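/- arXiv:2307.05594 — 4 statements merged into one kernel-verified Lean document; each statement's English description precedes it below -/
import Mathlib

section
/- There exists a constant C > 0 such that for every real y ≥ 1, the tail sum ∑_{m > y} 1/φ(m)² over positive integers m is at most C/y. -/
open Finset ENNReal

noncomputable def gg (d : ℕ) : ℝ :=
  if Squarefree d then ∏ p ∈ d.primeFactors, (6 / (p : ℝ)) else 0

lemma gg_nonneg (d : ℕ) : 0 ≤ gg d := by
  unfold gg
  split
  · exact Finset.prod_nonneg fun p _ => by positivity
  · exact le_refl _

lemma totient_real (n : ℕ) :
    (Nat.totient n : ℝ) = n * ∏ p ∈ n.primeFactors, (1 - (p : ℝ)⁻¹) := by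
  have h2 := congrArg (fun q : ℚ => (q : ℝ)) (Nat.totient_eq_mul_prod_factors n)
  push_cast at h2
  exact h2

lemma lemA2 (n : ℕ) :
    (n : ℝ) ^ 2 ≤ (Nat.totient n : ℝ) ^ 2 * ∏ p ∈ n.primeFactors, (1 + 6 / (p : ℝ)) := by
  have key : (1 : ℝ) ≤ ∏ p ∈ n.primeFactors, ((1 - (p : ℝ)⁻¹) ^ 2 * (1 + 6 / (p : ℝ))) := by
    refine le_trans (le_of_eq (Finset.prod_const_one (s := n.primeFactors)).symm)
      (Finset.prod_le_prod (fun _ _ => zero_le_one) ?_)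
    intro p hp
    have hp2 : (2 : ℝ) ≤ (p : ℝ) := by
      exact_mod_cast (Nat.prime_of_mem_primeFactors hp).two_le
    have hp0 : (0 : ℝ) < (p : ℝ) := by linarith
    have h1 : (1 - (p : ℝ)⁻¹) = ((p : ℝ) - 1) / p := by field_simp
    have h2 : (1 + 6 / (p : ℝ)) = ((p : ℝ) + 6) / p := by field_simp
    rw [h1, h2, div_pow, div_mul_div_comm, le_div_iff₀ (by positivity)]
    nlinarith [sq_nonneg ((p:ℝ) - 2)]
  rw [totient_real, mul_pow, mul_assoc]
  have hprod : (∏ p ∈ n.primeFactors, (1 - (p : ℝ)⁻¹)) ^ 2 *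
      ∏ p ∈ n.primeFactors, (1 + 6 / (p : ℝ)) =
      ∏ p ∈ n.primeFactors, ((1 - (p : ℝ)⁻¹) ^ 2 * (1 + 6 / (p : ℝ))) := by
    rw [Finset.prod_mul_distrib, Finset.prod_pow]
  rw [hprod]
  nlinarith [sq_nonneg (n : ℝ), key]

lemma lemA1 {n : ℕ} (h0 : n ≠ 0) :
    ∏ p ∈ n.primeFactors, (1 + 6 / (p : ℝ)) ≤ ∑ d ∈ n.divisors, gg d := by
  have h1 : ∏ p ∈ n.primeFactors, (6 / (p : ℝ) + 1)
      = ∑ t ∈ n.primeFactors.powerset, ∏ p ∈ t, (6 / (p : ℝ)) := by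
    rw [Finset.prod_add]
    exact Finset.sum_congr rfl fun t _ => by rw [Finset.prod_const_one, mul_one]
  have h2 : ∑ d ∈ n.divisors with Squarefree d, (∏ p ∈ d.primeFactors, (6 / (p : ℝ)))
      = ∑ t ∈ n.primeFactors.powerset, ∏ p ∈ t, (6 / (p : ℝ)) := by
    rw [Nat.sum_divisors_filter_squarefree h0]
    have hnf : (UniqueFactorizationMonoid.normalizedFactors n).toFinset = n.primeFactors := by
      rw [Nat.factors_eq, List.toFinset_coe, Nat.toFinset_factors]
    rw [hnf]
    apply Finset.sum_congr rfl
    intro t ht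
    have ht' : t ⊆ n.primeFactors := Finset.mem_powerset.mp ht
    have hprimes : ∀ p ∈ t, p.Prime := fun p hp =>
      Nat.prime_of_mem_primeFactors (ht' hp)
    have hval : (t.val.prod : ℕ) = ∏ p ∈ t, p := by
      simp only [Finset.prod_eq_multiset_prod, Multiset.map_id']
    rw [hval, Nat.primeFactors_prod hprimes]
  calc ∏ p ∈ n.primeFactors, (1 + 6 / (p : ℝ))
      = ∑ t ∈ n.primeFactors.powerset, ∏ p ∈ t, (6 / (p : ℝ)) := by
        rw [← h1]; exact Finset.prod_congr rfl fun p _ => by ring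
    _ = ∑ d ∈ n.divisors with Squarefree d, (∏ p ∈ d.primeFactors, (6 / (p : ℝ))) := h2.symm
    _ = ∑ d ∈ n.divisors with Squarefree d, gg d := by
        apply Finset.sum_congr rfl
        intro d hd
        rw [Finset.mem_filter] at hd
        rw [gg, if_pos hd.2]
    _ ≤ ∑ d ∈ n.divisors, gg d := by
        apply Finset.sum_le_sum_of_subset_of_nonneg (Finset.filter_subset _ _)
        intro d _ _
        unfold gg; split
        · exact Finset.prod_nonneg fun p _ => by positivity
        · exact le_refl _

lemma lemA {n : ℕ} (h0 : n ≠ 0) :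
    1 / (Nat.totient n : ℝ) ^ 2 ≤ (∑ d ∈ n.divisors, gg d) / (n : ℝ) ^ 2 := by
  have hφ : 0 < (Nat.totient n : ℝ) := by
    exact_mod_cast Nat.totient_pos.mpr (Nat.pos_of_ne_zero h0)
  have hn : 0 < (n : ℝ) := by exact_mod_cast Nat.pos_of_ne_zero h0
  rw [div_le_div_iff₀ (by positivity) (by positivity), one_mul]
  calc (n : ℝ) ^ 2 ≤ (Nat.totient n : ℝ) ^ 2 * ∏ p ∈ n.primeFactors, (1 + 6 / (p : ℝ)) :=
        lemA2 n
    _ ≤ (Nat.totient n : ℝ) ^ 2 * ∑ d ∈ n.divisors, gg d :=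
        mul_le_mul_of_nonneg_left (lemA1 h0) (by positivity)
    _ = (∑ d ∈ n.divisors, gg d) * (Nat.totient n : ℝ) ^ 2 := by ring

-- sqrt-36 helper
lemma thirtysix_rpow : ((36 : ℝ)) ^ ((1 : ℝ)/2) = 6 := by
  rw [show (36 : ℝ) = 6 ^ (2:ℕ) by norm_num, ← Real.rpow_natCast 6 2,
    ← Real.rpow_mul (by norm_num)]
  norm_num

lemma lemB (d : ℕ) : gg d / d ≤ 6 ^ 37 / (d : ℝ) ^ ((3 : ℝ)/2) := by
  by_cases hd : Squarefree d
  · have hd0 : d ≠ 0 := hd.ne_zero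
    have hdR : (0 : ℝ) < d := by exact_mod_cast Nat.pos_of_ne_zero hd0
    set S := d.primeFactors with hS
    have hcast : (d : ℝ) = ∏ p ∈ S, (p : ℝ) := by
      rw [← Nat.cast_prod, Nat.prod_primeFactors_of_squarefree hd]
    have claim1 : gg d / d = ∏ p ∈ S, (6 / (p : ℝ) ^ 2) := by
      rw [gg, if_pos hd, hcast, ← Finset.prod_div_distrib]
      exact Finset.prod_congr rfl fun p _ => by rw [div_div, sq]
    have hppos : ∀ p ∈ S, (0 : ℝ) < p := fun p hp => by
      exact_mod_cast (Nat.prime_of_mem_primeFactors hp).pos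
    have claim2 : ∀ p ∈ S, (6 / (p : ℝ) ^ 2) =
        (6 * (p : ℝ) ^ (-(1 : ℝ)/2)) * (p : ℝ) ^ (-(3 : ℝ)/2) := by
      intro p hp
      have hp0 := hppos p hp
      rw [mul_assoc, ← Real.rpow_add hp0]
      norm_num
      rw [div_eq_mul_inv]
    have claim3 : ∏ p ∈ S, (p : ℝ) ^ (-(3 : ℝ)/2) = (d : ℝ) ^ (-(3 : ℝ)/2) := by
      rw [hcast, ← Real.finset_prod_rpow S _ (fun p hp => (hppos p hp).le)]
    have claim4 : ∏ p ∈ S, (6 * (p : ℝ) ^ (-(1 : ℝ)/2)) ≤ 6 ^ 37 := by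
      rw [← Finset.prod_filter_mul_prod_filter_not S (· < 37)]
      have hb : ∏ p ∈ S with ¬ p < 37, (6 * (p : ℝ) ^ (-(1 : ℝ)/2)) ≤ 1 := by
        apply Finset.prod_le_one
        · intro p hp
          have := hppos p (Finset.mem_filter.mp hp).1
          positivity
        · intro p hp
          obtain ⟨hpS, hp37⟩ := Finset.mem_filter.mp hp
          have hp0 := hppos p hpS
          have h36 : (36 : ℝ) ≤ p := by
            have h : (36 : ℕ) ≤ p := by omega
            exact_mod_cast h
          have hle : (6 : ℝ) ≤ (p : ℝ) ^ ((1 : ℝ)/2) := by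
            rw [← thirtysix_rpow]
            exact Real.rpow_le_rpow (by norm_num) h36 (by norm_num)
          rw [show (-(1 : ℝ)/2) = -((1:ℝ)/2) by ring, Real.rpow_neg hp0.le,
            ← div_eq_mul_inv, div_le_one (by positivity)]
          exact hle
      have ha : ∏ p ∈ S with p < 37, (6 * (p : ℝ) ^ (-(1 : ℝ)/2)) ≤ 6 ^ 37 := by
        have hcard : (S.filter (· < 37)).card ≤ 37 := by
          have hsub : S.filter (· < 37) ⊆ Finset.range 37 := by
            intro p hp
            exact Finset.mem_range.mpr (Finset.mem_filter.mp hp).2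
          simpa using Finset.card_le_card hsub
        calc ∏ p ∈ S with p < 37, (6 * (p : ℝ) ^ (-(1 : ℝ)/2))
            ≤ 6 ^ (S.filter (· < 37)).card := by
              rw [← Finset.prod_const]
              apply Finset.prod_le_prod
              · intro p hp
                have := hppos p (Finset.mem_filter.mp hp).1
                positivity
              intro p hp
              have hp0 := hppos p (Finset.mem_filter.mp hp).1
              have hp1 : (1 : ℝ) ≤ p := by
                exact_mod_cast (Nat.prime_of_mem_primeFactors (Finset.mem_filter.mp hp).1).one_le
              have : (p : ℝ) ^ (-(1 : ℝ)/2) ≤ 1 :=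
                Real.rpow_le_one_of_one_le_of_nonpos hp1 (by norm_num)
              nlinarith [Real.rpow_nonneg hp0.le (-(1 : ℝ)/2)]
          _ ≤ 6 ^ 37 := pow_le_pow_right₀ (by norm_num) hcard
      calc _ ≤ (6:ℝ) ^ 37 * 1 := mul_le_mul ha hb (Finset.prod_nonneg fun p hp => by
              have := hppos p (Finset.mem_filter.mp hp).1; positivity) (by positivity)
        _ = 6 ^ 37 := mul_one _
    calc gg d / d = ∏ p ∈ S, (6 / (p : ℝ) ^ 2) := claim1
      _ = (∏ p ∈ S, (6 * (p : ℝ) ^ (-(1 : ℝ)/2))) * ∏ p ∈ S, (p : ℝ) ^ (-(3 : ℝ)/2) := by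
          rw [← Finset.prod_mul_distrib]
          exact Finset.prod_congr rfl claim2
      _ ≤ 6 ^ 37 * (d : ℝ) ^ (-(3 : ℝ)/2) := by
          rw [claim3]
          exact mul_le_mul_of_nonneg_right claim4 (Real.rpow_nonneg hdR.le _)
      _ = 6 ^ 37 / (d : ℝ) ^ ((3 : ℝ)/2) := by
          rw [show (-(3 : ℝ)/2) = -((3:ℝ)/2) by ring, Real.rpow_neg hdR.le]
          ring
  · rw [gg, if_neg hd, zero_div]
    exact div_nonneg (by positivity) (Real.rpow_nonneg (Nat.cast_nonneg d) _)

lemma tail_sq {n : ℕ} (hn : 1 ≤ n) :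
    ∑' k : ℕ, (if n ≤ k then ENNReal.ofReal (1 / (k : ℝ) ^ 2) else 0)
      ≤ ENNReal.ofReal (2 / n) := by
  apply ENNReal.tsum_le_of_sum_range_le
  intro N
  have h1 : ∑ k ∈ Finset.range N, (if n ≤ k then ENNReal.ofReal (1 / (k : ℝ) ^ 2) else 0)
      = ENNReal.ofReal (∑ k ∈ Finset.range N, if n ≤ k then 1 / (k : ℝ) ^ 2 else 0) := by
    rw [ENNReal.ofReal_sum_of_nonneg]
    · exact Finset.sum_congr rfl fun k _ => by split <;> simp
    · intro k _; split <;> positivity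
  rw [h1]
  apply ENNReal.ofReal_le_ofReal
  have h2 : ∑ k ∈ Finset.range N, (if n ≤ k then 1 / (k : ℝ) ^ 2 else 0)
      = ∑ k ∈ Finset.Ioo (n-1) N, 1 / (k : ℝ) ^ 2 := by
    rw [← Finset.sum_filter]
    congr 1
    ext k
    simp only [Finset.mem_filter, Finset.mem_range, Finset.mem_Ioo]
    omega
  rw [h2]
  have h3 : ∑ k ∈ Finset.Ioo (n-1) N, 1 / (k : ℝ) ^ 2 ≤ 2 / (((n-1 : ℕ) : ℝ) + 1) := by
    simpa only [one_div] using sum_Ioo_inv_sq_le (α := ℝ) (n-1) N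
  have h4 : ((n-1 : ℕ) : ℝ) + 1 = (n : ℝ) := by
    have : (n - 1 : ℕ) + 1 = n := Nat.succ_pred_eq_of_pos hn
    exact_mod_cast congrArg (Nat.cast : ℕ → ℝ) this
  rwa [h4] at h3

lemma tsum_antidiag (H : ℕ × ℕ → ENNReal) (h0 : ∀ pr : ℕ × ℕ, pr.1 * pr.2 = 0 → H pr = 0) :
    ∑' m : ℕ, ∑ pr ∈ m.divisorsAntidiagonal, H pr = ∑' pr : ℕ × ℕ, H pr := by
  have h1 : ∀ m : ℕ, ∑ pr ∈ m.divisorsAntidiagonal, H pr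
      = ∑' pr : ℕ × ℕ, (if pr.1 * pr.2 = m then H pr else 0) := by
    intro m
    rw [tsum_eq_sum (s := m.divisorsAntidiagonal)]
    · exact Finset.sum_congr rfl fun pr hpr => by
        rw [if_pos (Nat.mem_divisorsAntidiagonal.mp hpr).1]
    · intro pr hpr
      split
      · rename_i heq
        by_cases hm : m = 0
        · exact h0 pr (heq.trans hm)
        · exact absurd (Nat.mem_divisorsAntidiagonal.mpr ⟨heq, hm⟩) hpr
      · rfl
  calc ∑' m : ℕ, ∑ pr ∈ m.divisorsAntidiagonal, H pr
      = ∑' m : ℕ, ∑' pr : ℕ × ℕ, (if pr.1 * pr.2 = m then H pr else 0) := tsum_congr h1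
    _ = ∑' pr : ℕ × ℕ, ∑' m : ℕ, (if pr.1 * pr.2 = m then H pr else 0) := ENNReal.tsum_comm
    _ = ∑' pr : ℕ × ℕ, H pr := by
        apply tsum_congr
        intro pr
        rw [tsum_eq_single (pr.1 * pr.2)]
        · rw [if_pos rfl]
        · intro m hm
          rw [if_neg (fun h => hm h.symm)]

lemma hK_ne_top : (∑' d : ℕ, ENNReal.ofReal (gg d / d)) ≠ ⊤ := by
  have hsum : Summable (fun d : ℕ => (6:ℝ) ^ 37 / (d : ℝ) ^ ((3 : ℝ)/2)) := by
    have h := Real.summable_one_div_nat_rpow.mpr (show (1:ℝ) < 3/2 by norm_num)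
    have := h.mul_left ((6:ℝ) ^ 37)
    simpa only [mul_one_div] using this
  have h1 : (∑' d : ℕ, ENNReal.ofReal (gg d / d))
      ≤ ∑' d : ℕ, ENNReal.ofReal ((6:ℝ) ^ 37 / (d : ℝ) ^ ((3 : ℝ)/2)) :=
    ENNReal.tsum_le_tsum fun d => ENNReal.ofReal_le_ofReal (lemB d)
  have h2 : ∑' d : ℕ, ENNReal.ofReal ((6:ℝ) ^ 37 / (d : ℝ) ^ ((3 : ℝ)/2))
      = ENNReal.ofReal (∑' d : ℕ, (6:ℝ) ^ 37 / (d : ℝ) ^ ((3 : ℝ)/2)) :=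
    (ENNReal.ofReal_tsum_of_nonneg (fun d => by positivity) hsum).symm
  exact ne_top_of_le_ne_top (h2 ▸ ENNReal.ofReal_ne_top) h1

lemma inner_bound {y : ℝ} (hy : 1 ≤ y) (d : ℕ) :
    ∑' k : ℕ, (if y < ((d * k : ℕ) : ℝ) then
        ENNReal.ofReal (gg d / ((d * k : ℕ) : ℝ) ^ 2) else 0)
      ≤ ENNReal.ofReal (gg d / d) * ENNReal.ofReal (2 / y) := by
  have hy0 : (0 : ℝ) < y := lt_of_lt_of_le zero_lt_one hy
  by_cases hd : d = 0
  · subst hd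
    simp only [zero_mul, Nat.cast_zero]
    have : ∀ k : ℕ, (if y < ((0 : ℕ) : ℝ) then
        ENNReal.ofReal (gg 0 / ((0:ℕ) : ℝ) ^ 2) else 0) = 0 := by
      intro k
      rw [if_neg]
      push_cast
      linarith
    simp only [Nat.cast_zero] at this
    rw [tsum_congr (fun k => this k), tsum_zero]
    exact zero_le
  · have hdpos : 0 < d := Nat.pos_of_ne_zero hd
    have hdR : (0 : ℝ) < d := by exact_mod_cast hdpos
    set n := ⌈y / d⌉₊ with hn
    have hn1 : 1 ≤ n := Nat.one_le_iff_ne_zero.mpr (by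
      rw [hn]
      exact Nat.ceil_pos.mpr (div_pos hy0 hdR) |>.ne')
    have hpt : ∀ k : ℕ, (if y < ((d * k : ℕ) : ℝ) then
        ENNReal.ofReal (gg d / ((d * k : ℕ) : ℝ) ^ 2) else 0)
        ≤ ENNReal.ofReal (gg d * (1 / (d : ℝ) ^ 2)) *
          (if n ≤ k then ENNReal.ofReal (1 / (k : ℝ) ^ 2) else 0) := by
      intro k
      by_cases hk : y < ((d * k : ℕ) : ℝ)
      · rw [if_pos hk]
        have hkn : n ≤ k := by
          apply Nat.ceil_le.mpr
          have : y / d < k := by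
            rw [div_lt_iff₀ hdR]
            push_cast at hk ⊢
            linarith [hk]
          linarith
        rw [if_pos hkn, ← ENNReal.ofReal_mul (mul_nonneg (gg_nonneg d) (by positivity))]
        apply ENNReal.ofReal_le_ofReal
        have : ((d * k : ℕ) : ℝ) ^ 2 = (d : ℝ) ^ 2 * (k : ℝ) ^ 2 := by
          push_cast; ring
        rw [this]
        apply le_of_eq
        rw [div_eq_mul_inv, mul_inv]
        ring
      · rw [if_neg hk]
        exact zero_le
    calc ∑' k : ℕ, (if y < ((d * k : ℕ) : ℝ) then
          ENNReal.ofReal (gg d / ((d * k : ℕ) : ℝ) ^ 2) else 0)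
        ≤ ∑' k : ℕ, ENNReal.ofReal (gg d * (1 / (d : ℝ) ^ 2)) *
            (if n ≤ k then ENNReal.ofReal (1 / (k : ℝ) ^ 2) else 0) :=
          ENNReal.tsum_le_tsum hpt
      _ = ENNReal.ofReal (gg d * (1 / (d : ℝ) ^ 2)) *
            ∑' k : ℕ, (if n ≤ k then ENNReal.ofReal (1 / (k : ℝ) ^ 2) else 0) :=
          ENNReal.tsum_mul_left
      _ ≤ ENNReal.ofReal (gg d * (1 / (d : ℝ) ^ 2)) * ENNReal.ofReal (2 / n) :=
          mul_le_mul_right (tail_sq hn1) _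
      _ ≤ ENNReal.ofReal (gg d / d) * ENNReal.ofReal (2 / y) := by
          rw [← ENNReal.ofReal_mul (mul_nonneg (gg_nonneg d) (by positivity)), ← ENNReal.ofReal_mul
            (div_nonneg (gg_nonneg d) hdR.le)]
          apply ENNReal.ofReal_le_ofReal
          have hyd : y ≤ (d : ℝ) * n := by
            have h := Nat.le_ceil (y / d)
            rw [← hn] at h
            calc y = (y / d) * d := by field_simp
              _ ≤ (n : ℝ) * d := mul_le_mul_of_nonneg_right h hdR.le
              _ = (d : ℝ) * n := by ring
          have hnR : (0 : ℝ) < n := by exact_mod_cast hn1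
          have key : 2 / ((d:ℝ)^2 * n) ≤ 2 / ((d:ℝ) * y) := by
            apply div_le_div_of_nonneg_left (by norm_num) (by positivity)
            calc (d:ℝ) * y ≤ (d:ℝ) * ((d:ℝ) * n) :=
                mul_le_mul_of_nonneg_left hyd hdR.le
              _ = (d:ℝ)^2 * n := by ring
          calc gg d * (1 / (d : ℝ) ^ 2) * (2 / n) = gg d * (2 / ((d:ℝ)^2 * n)) := by ring
            _ ≤ gg d * (2 / ((d:ℝ) * y)) :=
                mul_le_mul_of_nonneg_left key (gg_nonneg d)
            _ = gg d / d * (2 / y) := by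
                field_simp

/-- There is a constant `C > 0` such that for every real `y ≥ 1`,
`∑_{m > y} 1/φ(m)² ≤ C/y`. -/
theorem tail_sum_one_div_totient_sq_le :
    ∃ C : ℝ, 0 < C ∧ ∀ y : ℝ, 1 ≤ y →
      (∑' m : {m : ℕ // y < (m : ℝ)}, 1 / ((Nat.totient m.1 : ℝ)) ^ 2) ≤ C / y := by
  classical
  set K : ENNReal := ∑' d : ℕ, ENNReal.ofReal (gg d / d) with hK
  refine ⟨2 * K.toReal + 1, by positivity, ?_⟩
  intro y hy
  have hy0 : (0 : ℝ) < y := lt_of_lt_of_le zero_lt_one hy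
  set C : ℝ := 2 * K.toReal + 1 with hC
  have hC0 : 0 < C := by positivity
  -- the ENNReal-valued objects
  set H : ℕ × ℕ → ENNReal := fun pr =>
    if y < ((pr.1 * pr.2 : ℕ) : ℝ) then
      ENNReal.ofReal (gg pr.1 / ((pr.1 * pr.2 : ℕ) : ℝ) ^ 2) else 0 with hHdef
  set T : ℕ → ENNReal := fun m =>
    ENNReal.ofReal ((∑ d ∈ m.divisors, gg d) / (m : ℝ) ^ 2) with hTdef
  have hne : ∀ m : {m : ℕ // y < (m : ℝ)}, m.1 ≠ 0 := by
    rintro ⟨m, hm⟩ rfl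
    simp only [Nat.cast_zero] at hm
    linarith
  -- step 3 : indicator equals antidiagonal sums
  have step3 : ∀ m : ℕ, Set.indicator {m : ℕ | y < (m : ℝ)} T m
      = ∑ pr ∈ m.divisorsAntidiagonal, H pr := by
    intro m
    by_cases hm : y < (m : ℝ)
    · simp only [Set.indicator_apply, Set.mem_setOf_eq, if_pos hm]
      have hm0 : m ≠ 0 := by
        rintro rfl
        simp only [Nat.cast_zero] at hm
        linarith
      have hT : T m = ∑ d ∈ m.divisors, ENNReal.ofReal (gg d / (m : ℝ) ^ 2) := by
        rw [hTdef]
        simp only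
        rw [Finset.sum_div, ENNReal.ofReal_sum_of_nonneg]
        intro d _
        have := gg_nonneg d
        positivity
      rw [hT, ← Nat.image_fst_divisorsAntidiagonal, Finset.sum_image]
      · apply Finset.sum_congr rfl
        intro pr hpr
        have h1 := (Nat.mem_divisorsAntidiagonal.mp hpr).1
        rw [hHdef]
        simp only
        rw [h1, if_pos hm]
      · intro pr hpr pr' hpr' hfst
        have h1 := (Nat.mem_divisorsAntidiagonal.mp hpr).1
        have h1' := (Nat.mem_divisorsAntidiagonal.mp hpr').1
        have hne1 : pr.1 ≠ 0 := by
          intro h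
          rw [h, zero_mul] at h1
          exact hm0 h1.symm
        have : pr.1 * pr.2 = pr.1 * pr'.2 := by rw [h1, hfst, h1']
        have h2 : pr.2 = pr'.2 := Nat.eq_of_mul_eq_mul_left (Nat.pos_of_ne_zero hne1) this
        exact Prod.ext hfst h2
    · simp only [Set.indicator_apply, Set.mem_setOf_eq, if_neg hm]
      symm
      apply Finset.sum_eq_zero
      intro pr hpr
      have h1 := (Nat.mem_divisorsAntidiagonal.mp hpr).1
      rw [hHdef]
      simp only
      rw [h1, if_neg hm]
  -- main ENNReal bound
  have hmain : ∑' m : {m : ℕ // y < (m : ℝ)},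
      ENNReal.ofReal (1 / ((Nat.totient m.1 : ℝ)) ^ 2) ≤ ENNReal.ofReal (C / y) := by
    calc ∑' m : {m : ℕ // y < (m : ℝ)}, ENNReal.ofReal (1 / ((Nat.totient m.1 : ℝ)) ^ 2)
        ≤ ∑' m : {m : ℕ // y < (m : ℝ)}, T m.1 :=
          ENNReal.tsum_le_tsum fun m => ENNReal.ofReal_le_ofReal (lemA (hne m))
      _ = ∑' m : ℕ, Set.indicator {m : ℕ | y < (m : ℝ)} T m := tsum_subtype _ T
      _ = ∑' m : ℕ, ∑ pr ∈ m.divisorsAntidiagonal, H pr := tsum_congr step3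
      _ = ∑' pr : ℕ × ℕ, H pr := by
          apply tsum_antidiag
          intro pr hpr
          rw [hHdef]
          simp only
          rw [hpr, if_neg (by simp only [Nat.cast_zero]; linarith)]
      _ = ∑' d : ℕ, ∑' k : ℕ, H (d, k) := ENNReal.tsum_prod (f := fun d k => H (d, k))
      _ ≤ ∑' d : ℕ, ENNReal.ofReal (gg d / d) * ENNReal.ofReal (2 / y) :=
          ENNReal.tsum_le_tsum fun d => inner_bound hy d
      _ = K * ENNReal.ofReal (2 / y) := ENNReal.tsum_mul_right
      _ ≤ ENNReal.ofReal (C / y) := by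
          have hKne : K ≠ ⊤ := by rw [hK]; exact hK_ne_top
          rw [← ENNReal.ofReal_toReal hKne, ← ENNReal.ofReal_mul ENNReal.toReal_nonneg]
          apply ENNReal.ofReal_le_ofReal
          rw [hC, show K.toReal * (2 / y) = 2 * K.toReal / y by ring]
          exact (div_le_div_iff_of_pos_right hy0).mpr (by linarith)
  -- convert back to a real statement
  have hne2 : ∑' m : {m : ℕ // y < (m : ℝ)},
      ENNReal.ofReal (1 / ((Nat.totient m.1 : ℝ)) ^ 2) ≠ ⊤ :=
    ne_top_of_le_ne_top ENNReal.ofReal_ne_top hmain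
  have hf0 : ∀ m : {m : ℕ // y < (m : ℝ)}, 0 ≤ 1 / ((Nat.totient m.1 : ℝ)) ^ 2 :=
    fun m => by positivity
  have h1 : ∑' m : {m : ℕ // y < (m : ℝ)}, 1 / ((Nat.totient m.1 : ℝ)) ^ 2
      = (∑' m : {m : ℕ // y < (m : ℝ)},
          ENNReal.ofReal (1 / ((Nat.totient m.1 : ℝ)) ^ 2)).toReal := by
    rw [ENNReal.tsum_toReal_eq (fun _ => ENNReal.ofReal_ne_top)]
    exact tsum_congr fun m => (ENNReal.toReal_ofReal (hf0 m)).symm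
  rw [h1]
  calc (∑' m : {m : ℕ // y < (m : ℝ)},
        ENNReal.ofReal (1 / ((Nat.totient m.1 : ℝ)) ^ 2)).toReal
      ≤ (ENNReal.ofReal (C / y)).toReal :=
        ENNReal.toReal_mono ENNReal.ofReal_ne_top hmain
    _ = C / y := ENNReal.toReal_ofReal (by positivity)
end

section
/- There exists a constant C > 0 such that for every real y ≥ 1, the tail sum ∑_{m > y} 1/(m·φ(m)) over positive integers m is at most C/y. -/
open Finset

private lemma card_divisors_le_two_mul_sqrt (n : ℕ) : n.divisors.card ≤ 2 * Nat.sqrt n := by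
  rcases eq_or_ne n 0 with rfl | hn
  · simp
  have h : n.divisors ⊆ (Finset.Icc 1 n.sqrt) ∪ (Finset.Icc 1 n.sqrt).image (n / ·) := by
    intro d hd
    obtain ⟨hdvd, -⟩ := Nat.mem_divisors.mp hd
    have hdpos : 0 < d := Nat.pos_of_mem_divisors hd
    rcases le_or_gt d n.sqrt with h1 | h1
    · exact Finset.mem_union_left _ (Finset.mem_Icc.mpr ⟨hdpos, h1⟩)
    · apply Finset.mem_union_right
      refine Finset.mem_image.mpr ⟨n / d, Finset.mem_Icc.mpr ⟨?_, ?_⟩, Nat.div_div_self hdvd hn⟩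
      · exact Nat.div_pos (Nat.le_of_dvd (Nat.pos_of_ne_zero hn) hdvd) hdpos
      · have hlt : n / d < n.sqrt + 1 := by
          rw [Nat.div_lt_iff_lt_mul hdpos]
          calc n < (n.sqrt + 1) * (n.sqrt + 1) := Nat.lt_succ_sqrt n
            _ ≤ (n.sqrt + 1) * d := Nat.mul_le_mul_left _ h1
        omega
  calc n.divisors.card ≤ _ := Finset.card_le_card h
    _ ≤ (Finset.Icc 1 n.sqrt).card + ((Finset.Icc 1 n.sqrt).image (n / ·)).card :=
        Finset.card_union_le _ _
    _ ≤ n.sqrt + n.sqrt :=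
        add_le_add (by simp) ((Finset.card_image_le).trans (by simp))
    _ = 2 * n.sqrt := by ring

private lemma sqrt_le_two_mul_totient {d : ℕ} (hd : d ≠ 0) :
    Real.sqrt d ≤ 2 * (Nat.totient d : ℝ) := by
  have hφpos : 0 < d.totient := Nat.totient_pos.mpr (Nat.pos_of_ne_zero hd)
  have h1 : d ≤ d.divisors.card * d.totient := by
    calc d = ∑ e ∈ d.divisors, e.totient := (Nat.sum_totient d).symm
      _ ≤ ∑ _e ∈ d.divisors, d.totient := by
          refine Finset.sum_le_sum fun e he => ?_
          exact Nat.le_of_dvd hφpos (Nat.totient_dvd_of_dvd (Nat.dvd_of_mem_divisors he))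
      _ = d.divisors.card * d.totient := by rw [Finset.sum_const, smul_eq_mul]
  have h2 : d ≤ 2 * Nat.sqrt d * d.totient :=
    le_trans h1 (Nat.mul_le_mul_right _ (card_divisors_le_two_mul_sqrt d))
  have h3 : (Nat.sqrt d : ℝ) ≤ Real.sqrt d := by
    have hq : (d.sqrt : ℝ) ^ 2 = ((d.sqrt ^ 2 : ℕ) : ℝ) := by push_cast; ring
    rw [Real.le_sqrt (by positivity) (by positivity), hq]
    exact Nat.cast_le.mpr (Nat.sqrt_le' d)
  have h4 : (d : ℝ) ≤ 2 * Real.sqrt d * d.totient := by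
    have h2' : (d : ℝ) ≤ 2 * (Nat.sqrt d : ℝ) * d.totient := by exact_mod_cast h2
    have hφ0 : (0:ℝ) ≤ (d.totient : ℝ) := by positivity
    nlinarith
  have h5 : Real.sqrt d * Real.sqrt d = (d : ℝ) := Real.mul_self_sqrt (by positivity)
  have hsp : 0 < Real.sqrt d := Real.sqrt_pos.mpr (by exact_mod_cast Nat.pos_of_ne_zero hd)
  nlinarith

private lemma div_totient_le_sum {m : ℕ} (hm : m ≠ 0) :
    (m : ℝ) / (Nat.totient m : ℝ) ≤ ∑ d ∈ m.divisors, 1 / (Nat.totient d : ℝ) := by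
  have hφ : (0:ℝ) < (m.totient : ℝ) := by
    exact_mod_cast Nat.totient_pos.mpr (Nat.pos_of_ne_zero hm)
  rw [div_le_iff₀ hφ]
  have key : ∀ d ∈ m.divisors, (d.totient : ℝ) ≤ (m.totient : ℝ) / ((m / d).totient : ℝ) := by
    intro d hd
    have hdvd := Nat.dvd_of_mem_divisors hd
    have h1 : d.totient * (m / d).totient ≤ m.totient := by
      calc d.totient * (m / d).totient ≤ (d * (m / d)).totient :=
            Nat.totient_super_multiplicative _ _
        _ = m.totient := by rw [Nat.mul_div_cancel' hdvd]
    have hpos : (0:ℝ) < ((m / d).totient : ℝ) := by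
      have hmd : 0 < m / d :=
        Nat.div_pos (Nat.le_of_dvd (Nat.pos_of_ne_zero hm) hdvd) (Nat.pos_of_mem_divisors hd)
      exact_mod_cast Nat.totient_pos.mpr hmd
    rw [le_div_iff₀ hpos]
    exact_mod_cast h1
  calc (m : ℝ) = ∑ d ∈ m.divisors, (d.totient : ℝ) := by exact_mod_cast (Nat.sum_totient m).symm
    _ ≤ ∑ d ∈ m.divisors, (m.totient : ℝ) / ((m / d).totient : ℝ) := Finset.sum_le_sum key
    _ = ∑ d ∈ m.divisors, (m.totient : ℝ) / (d.totient : ℝ) :=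
        Nat.sum_div_divisors m (fun d => (m.totient : ℝ) / (d.totient : ℝ))
    _ = (∑ d ∈ m.divisors, 1 / (d.totient : ℝ)) * (m.totient : ℝ) := by
        rw [Finset.sum_mul]
        exact Finset.sum_congr rfl fun d _ => by ring

private lemma summable_ite_inv_sq (x : ℝ) :
    Summable (fun k : ℕ => if x < (k : ℝ) then ((k : ℝ) ^ 2)⁻¹ else 0) := by
  have hs : Summable (fun k : ℕ => ((k : ℝ) ^ 2)⁻¹) := by
    simpa only [one_div] using Real.summable_one_div_nat_pow.mpr one_lt_two
  refine Summable.of_nonneg_of_le (fun k => ?_) (fun k => ?_) hs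
  · split <;> positivity
  · split
    · exact le_rfl
    · positivity

private lemma tail_inv_sq_le {x : ℝ} (hx : 0 < x) :
    (∑' k : ℕ, if x < (k : ℝ) then ((k : ℝ) ^ 2)⁻¹ else 0) ≤ 4 / x := by
  classical
  set u : ℕ := max ⌊x⌋₊ 1 with hu
  have hu1 : 1 ≤ u := le_max_right _ _
  have hu1' : (1:ℝ) ≤ (u : ℝ) := by exact_mod_cast hu1
  have hupos : (0:ℝ) < (u : ℝ) := by linarith
  have hux : x / 2 ≤ (u : ℝ) := by
    have h1 : x - 1 < (⌊x⌋₊ : ℝ) := Nat.sub_one_lt_floor x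
    have h2 : (⌊x⌋₊ : ℝ) ≤ (u : ℝ) := by exact_mod_cast le_max_left ⌊x⌋₊ 1
    rcases le_or_gt x 2 with h | h <;> linarith
  refine Summable.tsum_le_of_sum_le (summable_ite_inv_sq x) fun s => ?_
  have hfil : (∑ k ∈ s, if x < (k : ℝ) then ((k : ℝ) ^ 2)⁻¹ else 0)
      = ∑ k ∈ s.filter (fun k : ℕ => x < (k : ℝ)), ((k : ℝ) ^ 2)⁻¹ := (Finset.sum_filter _ _).symm
  rw [hfil]
  set s' := s.filter (fun k : ℕ => x < (k : ℝ)) with hs'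
  have hmem : ∀ k ∈ s', u ≤ k := by
    intro k hk
    have hxk : x < (k : ℝ) := by
      have := Finset.mem_filter.mp hk
      exact this.2
    have hk1 : 1 ≤ k := by
      rcases Nat.eq_zero_or_pos k with rfl | h
      · exfalso; simp only [Nat.cast_zero] at hxk; linarith
      · exact h
    have hfk : ⌊x⌋₊ ≤ k := by
      have hfx : (⌊x⌋₊ : ℝ) ≤ x := Nat.floor_le hx.le
      exact_mod_cast Nat.cast_le.mp (by linarith : (⌊x⌋₊ : ℝ) ≤ (k : ℝ))
    exact max_le hfk hk1
  set N : ℕ := max (s.sup id) u with hN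
  have huN : u ≤ N := le_max_right _ _
  have hsub : s' ⊆ Finset.Icc u N := by
    intro k hk
    refine Finset.mem_Icc.mpr ⟨hmem k hk, ?_⟩
    have hk' : k ≤ s.sup id := Finset.le_sup (f := id) (Finset.mem_of_mem_filter k hk)
    exact le_trans hk' (le_max_left _ _)
  calc (∑ k ∈ s', ((k : ℝ) ^ 2)⁻¹) ≤ ∑ k ∈ Finset.Icc u N, ((k : ℝ) ^ 2)⁻¹ :=
        Finset.sum_le_sum_of_subset_of_nonneg hsub fun k _ _ => by positivity
    _ = ((u : ℝ) ^ 2)⁻¹ + ∑ k ∈ Finset.Ioc u N, ((k : ℝ) ^ 2)⁻¹ := by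
        rw [Finset.Icc_eq_cons_Ioc huN, Finset.sum_cons]
    _ ≤ ((u : ℝ))⁻¹ + ((u : ℝ)⁻¹ - (N : ℝ)⁻¹) := by
        refine add_le_add ?_ (sum_Ioc_inv_sq_le_sub (Nat.one_le_iff_ne_zero.mp hu1) huN)
        rw [sq, mul_inv]
        calc (u : ℝ)⁻¹ * (u : ℝ)⁻¹ ≤ 1 * (u : ℝ)⁻¹ := by
              refine mul_le_mul_of_nonneg_right ?_ (by positivity)
              rw [inv_le_one_iff₀]
              right; exact hu1'
          _ = (u : ℝ)⁻¹ := one_mul _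
    _ ≤ 2 * (u : ℝ)⁻¹ := by
        have hN0 : (0:ℝ) ≤ (N : ℝ)⁻¹ := by positivity
        linarith
    _ ≤ 4 / x := by
        rw [le_div_iff₀ hx]
        calc 2 * (u:ℝ)⁻¹ * x ≤ 2 * (u:ℝ)⁻¹ * (2 * u) :=
              mul_le_mul_of_nonneg_left (by linarith) (by positivity)
          _ = 4 * ((u:ℝ)⁻¹ * u) := by ring
          _ = 4 := by rw [inv_mul_cancel₀ (ne_of_gt hupos)]; ring

/-- There is a constant `C > 0` such that for every real `y ≥ 1`,
`∑_{m > y} 1/(m·φ(m)) ≤ C/y`. -/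
theorem tail_sum_one_div_mul_totient_le :
    ∃ C : ℝ, 0 < C ∧ ∀ y : ℝ, 1 ≤ y →
      (∑' m : {m : ℕ // y < (m : ℝ)}, 1 / ((m.1 : ℝ) * (Nat.totient m.1 : ℝ))) ≤ C / y := by
  have hK : Summable (fun d : ℕ => 1 / (d : ℝ) ^ ((3:ℝ)/2)) :=
    Real.summable_one_div_nat_rpow.mpr (by norm_num)
  set K : ℝ := ∑' d : ℕ, 1 / (d : ℝ) ^ ((3:ℝ)/2) with hKdef
  have hK1 : 1 ≤ K := by
    have h := Summable.le_tsum hK 1 (fun j _ => by positivity)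
    simp only [Nat.cast_one, Real.one_rpow, div_one] at h
    rw [hKdef]
    exact h
  refine ⟨8 * K, by linarith, fun y hy => ?_⟩
  have hy0 : 0 < y := lt_of_lt_of_le one_pos hy
  have hCy : 0 ≤ 8 * K / y := by positivity
  set S : Set ℕ := {m : ℕ | y < (m : ℝ)} with hS
  set F : ℕ × ℕ → ENNReal := fun p =>
    if y < ((p.1 * p.2 : ℕ) : ℝ) then
      ENNReal.ofReal (2 / (Real.sqrt p.1 * ((p.1 * p.2 : ℕ) : ℝ) ^ 2)) else 0 with hF
  have key : (∑' m : S, ENNReal.ofReal (1 / ((m : ℝ) * (Nat.totient m : ℝ))))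
      ≤ ENNReal.ofReal (8 * K / y) := by
    have stepB : ∀ m : ℕ,
        S.indicator (fun m => ENNReal.ofReal (1 / ((m : ℝ) * (Nat.totient m : ℝ)))) m
        ≤ ∑ p ∈ m.divisorsAntidiagonal, F p := by
      intro m
      by_cases hmS : m ∈ S
      · rw [Set.indicator_of_mem hmS]
        have hym : y < (m : ℝ) := hmS
        have hm0 : m ≠ 0 := by
          rintro rfl
          simp only [Nat.cast_zero] at hym
          linarith
        have hmpos : (0:ℝ) < (m : ℝ) := by exact_mod_cast Nat.pos_of_ne_zero hm0
        have hφ : (0:ℝ) < (m.totient : ℝ) := by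
          exact_mod_cast Nat.totient_pos.mpr (Nat.pos_of_ne_zero hm0)
        have hR : (∑ p ∈ m.divisorsAntidiagonal, F p)
            = ∑ d ∈ m.divisors, ENNReal.ofReal (2 / (Real.sqrt d * (m : ℝ) ^ 2)) := by
          rw [← Nat.sum_divisorsAntidiagonal
            (fun d _k => ENNReal.ofReal (2 / (Real.sqrt d * (m : ℝ) ^ 2)))]
          refine Finset.sum_congr rfl fun p hp => ?_
          obtain ⟨hpm, -⟩ := Nat.mem_divisorsAntidiagonal.mp hp
          rw [hF]
          simp only [hpm, if_pos hym]
        rw [hR, ← ENNReal.ofReal_sum_of_nonneg (fun d _ => by positivity)]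
        refine ENNReal.ofReal_le_ofReal ?_
        have h1 := div_totient_le_sum hm0
        have h2 : (∑ d ∈ m.divisors, 1 / (Nat.totient d : ℝ))
            ≤ ∑ d ∈ m.divisors, 2 / Real.sqrt d := by
          refine Finset.sum_le_sum fun d hd => ?_
          have hd0 : d ≠ 0 := (Nat.pos_of_mem_divisors hd).ne'
          have hsd : 0 < Real.sqrt d :=
            Real.sqrt_pos.mpr (by exact_mod_cast Nat.pos_of_ne_zero hd0)
          have hφd : (0:ℝ) < (d.totient : ℝ) := by
            exact_mod_cast Nat.totient_pos.mpr (Nat.pos_of_ne_zero hd0)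
          rw [div_le_div_iff₀ hφd hsd]
          have := sqrt_le_two_mul_totient hd0
          linarith
        have heq : 1 / ((m : ℝ) * (Nat.totient m : ℝ))
            = ((m : ℝ) / (m.totient : ℝ)) * ((m : ℝ) ^ 2)⁻¹ := by
          field_simp
        rw [heq]
        calc ((m : ℝ) / (m.totient : ℝ)) * ((m : ℝ) ^ 2)⁻¹
            ≤ (∑ d ∈ m.divisors, 2 / Real.sqrt d) * ((m : ℝ) ^ 2)⁻¹ :=
              mul_le_mul_of_nonneg_right (h1.trans h2) (by positivity)
          _ = ∑ d ∈ m.divisors, 2 / (Real.sqrt d * (m : ℝ) ^ 2) := by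
              rw [Finset.sum_mul]
              refine Finset.sum_congr rfl fun d _ => ?_
              rw [div_mul_eq_mul_div, div_mul_eq_div_div_swap, div_div]
              ring_nf
      · rw [Set.indicator_of_notMem hmS]
        exact zero_le
    have stepC : (∑' m : ℕ, ∑ p ∈ m.divisorsAntidiagonal, F p) ≤ ∑' p : ℕ × ℕ, F p := by
      rw [← ENNReal.tsum_fiberwise F (fun p => p.1 * p.2)]
      refine ENNReal.tsum_le_tsum fun m => ?_
      rw [← Finset.tsum_subtype]
      refine ENNReal.tsum_mono_subtype F fun p hp => ?_
      have hp' : p ∈ m.divisorsAntidiagonal := hp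
      have hpm := (Nat.mem_divisorsAntidiagonal.mp hp').1
      simp [Set.mem_preimage, hpm]
    have stepE : ∀ d : ℕ, (∑' k : ℕ, F (d, k))
        ≤ ENNReal.ofReal ((8 / y) * (1 / (d : ℝ) ^ ((3:ℝ)/2))) := by
      intro d
      rcases eq_or_ne d 0 with rfl | hd0
      · have hz : ∀ k : ℕ, F (0, k) = 0 := by
          intro k
          simp only [hF, Nat.zero_mul, Nat.cast_zero]
          rw [if_neg (by linarith)]
        simp only [hz, tsum_zero]
        exact zero_le
      · have hdpos : (0:ℝ) < (d : ℝ) := by exact_mod_cast Nat.pos_of_ne_zero hd0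
        have hsd : 0 < Real.sqrt d := Real.sqrt_pos.mpr hdpos
        set c : ℝ := 2 / (Real.sqrt d * (d : ℝ) ^ 2) with hc
        have hc0 : 0 ≤ c := by positivity
        have hFk : ∀ k : ℕ, F (d, k)
            = ENNReal.ofReal (c * (if y / (d:ℝ) < (k : ℝ) then ((k : ℝ) ^ 2)⁻¹ else 0)) := by
          intro k
          have hcast : ((d * k : ℕ) : ℝ) = (d : ℝ) * (k : ℝ) := by push_cast; ring
          have hcond : (y < ((d * k : ℕ) : ℝ)) ↔ y / (d:ℝ) < (k : ℝ) := by
            rw [hcast, div_lt_iff₀ hdpos, mul_comm]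
          by_cases h : y / (d:ℝ) < (k : ℝ)
          · have hk0 : k ≠ 0 := by
              rintro rfl
              simp only [Nat.cast_zero] at h
              have hyd : 0 < y / (d:ℝ) := by positivity
              linarith
            have hkpos : (0:ℝ) < (k : ℝ) := by exact_mod_cast Nat.pos_of_ne_zero hk0
            simp only [hF]
            rw [if_pos (hcond.mpr h), if_pos h]
            congr 1
            rw [hcast, hc]
            field_simp
          · simp only [hF]
            rw [if_neg (fun hh => h (hcond.mp hh)), if_neg h, mul_zero,
              ENNReal.ofReal_zero]
        calc (∑' k : ℕ, F (d, k))
            = ∑' k : ℕ, ENNReal.ofReal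
                (c * (if y / (d:ℝ) < (k : ℝ) then ((k : ℝ) ^ 2)⁻¹ else 0)) := tsum_congr hFk
          _ = ∑' k : ℕ, ENNReal.ofReal c
                * ENNReal.ofReal (if y / (d:ℝ) < (k : ℝ) then ((k : ℝ) ^ 2)⁻¹ else 0) := by
              refine tsum_congr fun k => ?_
              rw [ENNReal.ofReal_mul hc0]
          _ = ENNReal.ofReal c
                * ∑' k : ℕ, ENNReal.ofReal (if y / (d:ℝ) < (k : ℝ) then ((k : ℝ) ^ 2)⁻¹ else 0) :=
              ENNReal.tsum_mul_left
          _ = ENNReal.ofReal c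
                * ENNReal.ofReal (∑' k : ℕ, if y / (d:ℝ) < (k : ℝ) then ((k : ℝ) ^ 2)⁻¹ else 0) := by
              rw [← ENNReal.ofReal_tsum_of_nonneg (fun k => by split <;> positivity)
                (summable_ite_inv_sq _)]
          _ ≤ ENNReal.ofReal c * ENNReal.ofReal (4 / (y / (d:ℝ))) :=
              mul_le_mul_right (ENNReal.ofReal_le_ofReal (tail_inv_sq_le (by positivity))) _
          _ = ENNReal.ofReal (c * (4 / (y / (d:ℝ)))) := (ENNReal.ofReal_mul hc0).symm
          _ ≤ ENNReal.ofReal ((8 / y) * (1 / (d : ℝ) ^ ((3:ℝ)/2))) := by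
              refine ENNReal.ofReal_le_ofReal (le_of_eq ?_)
              have h32 : (d : ℝ) ^ ((3:ℝ)/2) = (d:ℝ) * Real.sqrt d := by
                rw [show ((3:ℝ)/2) = 1 + 1/2 by norm_num, Real.rpow_add hdpos, Real.rpow_one,
                  Real.sqrt_eq_rpow]
              rw [hc, h32]
              field_simp
              ring
    have hsumf : Summable (fun d : ℕ => (8 / y) * (1 / (d : ℝ) ^ ((3:ℝ)/2))) := hK.mul_left _
    have stepF : (∑' d : ℕ, ENNReal.ofReal ((8 / y) * (1 / (d : ℝ) ^ ((3:ℝ)/2))))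
        = ENNReal.ofReal (8 * K / y) := by
      rw [← ENNReal.ofReal_tsum_of_nonneg (fun d => by positivity) hsumf, tsum_mul_left]
      congr 1
      rw [← hKdef]
      ring
    calc (∑' m : S, ENNReal.ofReal (1 / ((m : ℝ) * (Nat.totient m : ℝ))))
        = ∑' m : ℕ, S.indicator
            (fun m => ENNReal.ofReal (1 / ((m : ℝ) * (Nat.totient m : ℝ)))) m :=
          _root_.tsum_subtype S (fun m : ℕ => ENNReal.ofReal (1 / ((m:ℝ) * (Nat.totient m : ℝ))))
      _ ≤ ∑' m : ℕ, ∑ p ∈ m.divisorsAntidiagonal, F p := ENNReal.tsum_le_tsum stepB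
      _ ≤ ∑' p : ℕ × ℕ, F p := stepC
      _ = ∑' d : ℕ, ∑' k : ℕ, F (d, k) := ENNReal.tsum_prod'
      _ ≤ ∑' d : ℕ, ENNReal.ofReal ((8 / y) * (1 / (d : ℝ) ^ ((3:ℝ)/2))) :=
          ENNReal.tsum_le_tsum stepE
      _ = ENNReal.ofReal (8 * K / y) := stepF
  by_cases hsum : Summable (fun m : S => 1 / ((m : ℝ) * (Nat.totient (m : ℕ) : ℝ)))
  · have h1 : ENNReal.ofReal (∑' m : S, 1 / ((m : ℝ) * (Nat.totient (m : ℕ) : ℝ)))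
        = ∑' m : S, ENNReal.ofReal (1 / ((m : ℝ) * (Nat.totient (m : ℕ) : ℝ))) :=
      ENNReal.ofReal_tsum_of_nonneg (fun m => by positivity) hsum
    exact (ENNReal.ofReal_le_ofReal_iff hCy).mp (h1 ▸ key)
  · have h0 : (∑' m : S, 1 / ((m : ℝ) * (Nat.totient (m : ℕ) : ℝ))) = 0 :=
      tsum_eq_zero_of_not_summable hsum
    exact h0 ▸ hCy
end

section
/- There exist constants C > 0 and x₀ > 0 such that for every real x ≥ x₀ and every real y with 3 ≤ y ≤ √x, one has ∑_{y < m ≤ √x + 1} 1/(m² · φ(m) · log(9x/m²)) ≤ C/(y² · log(9x/y²)), where the sum is over all positive integers m in the indicated range. -/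
open scoped Classical
open Finset

/-- Tail bound for sum of 1/k^2. -/
lemma tail_sq_sum {M : ℕ} (hM : 1 ≤ M) (N : ℕ) :
    ∑ k ∈ Finset.Icc M N, (1 : ℝ) / (k : ℝ) ^ 2 ≤ 2 / M := by
  rcases lt_or_ge N M with h | h
  · rw [Finset.Icc_eq_empty (by omega)]
    simp only [Finset.sum_empty]
    positivity
  · have key : ∀ n, M ≤ n → ∑ k ∈ Finset.Icc M n, (1:ℝ) / (k:ℝ) ^ 2 ≤ 2 / M - 1 / n := by
      intro n hn
      induction n, hn using Nat.le_induction with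
      | base =>
        rw [Finset.Icc_self, Finset.sum_singleton]
        have hM' : (1:ℝ) ≤ (M:ℝ) := by exact_mod_cast hM
        rw [div_sub_div _ _ (by positivity) (by positivity)]
        rw [div_le_div_iff₀ (by positivity) (by positivity)]
        nlinarith
      | succ n hn ih =>
        rw [Finset.sum_Icc_succ_top (by omega)]
        have hn' : (1:ℝ) ≤ (n:ℝ) := by exact_mod_cast hM.trans hn
        have h1 : (1:ℝ) / ((n:ℝ)+1) ^ 2 ≤ 1 / n - 1 / (n+1) := by
          rw [div_sub_div _ _ (by positivity) (by positivity)]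
          rw [div_le_div_iff₀ (by positivity) (by positivity)]
          nlinarith
        push_cast
        linarith
    have := key N h
    have hN : (0:ℝ) < N := by exact_mod_cast hM.trans h
    have : (0:ℝ) ≤ 1 / N := by positivity
    linarith [key N h]

/-- Weierstrass product inequality. -/
lemma weierstrass (s : Finset ℕ) (f : ℕ → ℝ) (h0 : ∀ i ∈ s, 0 ≤ f i)
    (h1 : ∀ i ∈ s, f i ≤ 1) :
    1 - ∑ i ∈ s, f i ≤ ∏ i ∈ s, (1 - f i) := by
  induction s using Finset.cons_induction with
  | empty => simp
  | cons a s ha ih =>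
    rw [Finset.sum_cons, Finset.prod_cons]
    have ih' := ih (fun i hi => h0 i (Finset.mem_cons_of_mem hi))
      (fun i hi => h1 i (Finset.mem_cons_of_mem hi))
    have ha0 : 0 ≤ f a := h0 a (Finset.mem_cons_self a s)
    have ha1 : f a ≤ 1 := h1 a (Finset.mem_cons_self a s)
    have hs0 : 0 ≤ ∑ i ∈ s, f i := Finset.sum_nonneg (fun i hi => h0 i (Finset.mem_cons_of_mem hi))
    nlinarith

/-- Sum of 1/p² over prime factors is at most 11/12. -/
lemma primeFactors_sq_sum (n : ℕ) :
    ∑ p ∈ n.primeFactors, (1 : ℝ) / (p : ℝ) ^ 2 ≤ 11 / 12 := by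
  have hsub : n.primeFactors.erase 2 ⊆ Finset.Icc 3 n := by
    intro p hp
    rw [Finset.mem_erase] at hp
    obtain ⟨hp2, hpf⟩ := hp
    have hpp := Nat.prime_of_mem_primeFactors hpf
    have hdvd := Nat.le_of_mem_primeFactors hpf
    rw [Finset.mem_Icc]
    have := hpp.two_le
    constructor <;> omega
  have h3 : ∑ p ∈ n.primeFactors.erase 2, (1 : ℝ) / (p : ℝ) ^ 2 ≤ 2 / 3 := by
    calc ∑ p ∈ n.primeFactors.erase 2, (1 : ℝ) / (p : ℝ) ^ 2
        ≤ ∑ k ∈ Finset.Icc 3 n, (1 : ℝ) / (k : ℝ) ^ 2 :=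
          Finset.sum_le_sum_of_subset_of_nonneg hsub (fun i _ _ => by positivity)
      _ ≤ 2 / 3 := by simpa using tail_sq_sum (M := 3) (by norm_num) n
  by_cases h2 : 2 ∈ n.primeFactors
  · rw [← Finset.add_sum_erase _ _ h2]
    have h4 : (1:ℝ) / ((2:ℕ):ℝ) ^ 2 = 1 / 4 := by norm_num
    rw [h4]
    linarith
  · rw [← Finset.erase_eq_of_notMem h2]
    linarith

/-- φ(n) σ(n) ≥ n²/12. -/
lemma totient_sigma_lower (n : ℕ) (hn : 0 < n) :
    (n : ℝ) ^ 2 ≤ 12 * (Nat.totient n : ℝ) * (∑ d ∈ n.divisors, (d : ℝ)) := by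
  have key : ∀ m : ℕ, 0 < m →
      (m : ℝ) ^ 2 * ∏ p ∈ m.primeFactors, (1 - 1 / (p : ℝ) ^ 2)
        ≤ (Nat.totient m : ℝ) * (∑ d ∈ m.divisors, (d : ℝ)) := by
    intro m
    induction m using Nat.recOnPosPrimePosCoprime with
    | prime_pow p k hp hk =>
      intro _
      have hp2 : 2 ≤ p := hp.two_le
      have hpR : (2:ℝ) ≤ (p:ℝ) := by exact_mod_cast hp2
      rw [Nat.primeFactors_prime_pow hk.ne' hp, Finset.prod_singleton]
      have htot : (Nat.totient (p ^ k) : ℝ) = (p:ℝ) ^ (k - 1) * ((p:ℝ) - 1) := by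
        rw [Nat.totient_prime_pow hp hk]
        push_cast [Nat.cast_pred (by omega : 0 < p)]
        ring
      have hσ : (p:ℝ) ^ (k-1) * ((p:ℝ) + 1) ≤ ∑ d ∈ (p ^ k).divisors, (d : ℝ) := by
        have hsub : ({p ^ k, p ^ (k-1)} : Finset ℕ) ⊆ (p ^ k).divisors := by
          intro d hd
          simp only [Finset.mem_insert, Finset.mem_singleton] at hd
          rcases hd with rfl | rfl
          · exact Nat.mem_divisors.mpr ⟨dvd_rfl, pow_ne_zero _ (by omega)⟩
          · exact Nat.mem_divisors.mpr ⟨pow_dvd_pow _ (by omega), pow_ne_zero _ (by omega)⟩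
        have hne : p ^ k ≠ p ^ (k - 1) := by
          intro h
          have := Nat.pow_right_injective hp2 h
          omega
        calc (p:ℝ) ^ (k-1) * ((p:ℝ) + 1) = ∑ d ∈ ({p ^ k, p ^ (k-1)} : Finset ℕ), (d : ℝ) := by
              rw [Finset.sum_pair hne]
              push_cast
              have : (p:ℝ) ^ k = (p:ℝ) ^ (k-1) * (p:ℝ) := by
                rw [← pow_succ]
                congr 1
                omega
              rw [this]; ring
          _ ≤ _ := Finset.sum_le_sum_of_subset_of_nonneg hsub (fun i _ _ => by positivity)
      rw [htot, Nat.cast_pow]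
      calc ((p:ℝ) ^ k) ^ 2 * (1 - 1 / (p:ℝ) ^ 2)
          = ((p:ℝ) ^ (k-1) * ((p:ℝ) - 1)) * ((p:ℝ) ^ (k-1) * ((p:ℝ) + 1)) := by
            have hk1 : k = (k - 1) + 1 := by omega
            rw [hk1]
            simp only [Nat.add_sub_cancel]
            field_simp
            ring
        _ ≤ ((p:ℝ) ^ (k-1) * ((p:ℝ) - 1)) * (∑ d ∈ (p ^ k).divisors, (d : ℝ)) := by
            apply mul_le_mul_of_nonneg_left hσ
            exact mul_nonneg (by positivity) (by linarith)
    | zero => intro h; omega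
    | one => intro _; simp
    | coprime a b ha hb hab iha ihb =>
      intro _
      have ha0 : 0 < a := by omega
      have hb0 : 0 < b := by omega
      have hσm : (∑ d ∈ (a*b).divisors, (d:ℝ))
          = (∑ d ∈ a.divisors, (d:ℝ)) * (∑ d ∈ b.divisors, (d:ℝ)) := by
        rw [← Nat.cast_sum, ← Nat.cast_sum, ← Nat.cast_sum, ← Nat.cast_mul,
          hab.sum_divisors_mul]
      rw [Nat.primeFactors_mul ha0.ne' hb0.ne',
        Finset.prod_union hab.disjoint_primeFactors,
        Nat.totient_mul hab, hσm]
      have h1 := iha ha0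
      have h2 := ihb hb0
      have hpa : (0:ℝ) ≤ ∏ p ∈ a.primeFactors, (1 - 1 / (p : ℝ) ^ 2) := by
        apply Finset.prod_nonneg
        intro p hp
        have : 2 ≤ p := (Nat.prime_of_mem_primeFactors hp).two_le
        have : (2:ℝ) ≤ (p:ℝ) := by exact_mod_cast this
        have : (1:ℝ) / (p:ℝ)^2 ≤ 1 := by
          rw [div_le_one (by positivity)]; nlinarith
        linarith
      have hpb : (0:ℝ) ≤ ∏ p ∈ b.primeFactors, (1 - 1 / (p : ℝ) ^ 2) := by
        apply Finset.prod_nonneg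
        intro p hp
        have : 2 ≤ p := (Nat.prime_of_mem_primeFactors hp).two_le
        have : (2:ℝ) ≤ (p:ℝ) := by exact_mod_cast this
        have : (1:ℝ) / (p:ℝ)^2 ≤ 1 := by
          rw [div_le_one (by positivity)]; nlinarith
        linarith
      have hta : (0:ℝ) ≤ (Nat.totient a : ℝ) := by positivity
      have hsa : (0:ℝ) ≤ ∑ d ∈ a.divisors, (d : ℝ) :=
        Finset.sum_nonneg fun i _ => by positivity
      have e1 : (0:ℝ) ≤ (a:ℝ)^2 * ∏ p ∈ a.primeFactors, (1 - 1 / (p : ℝ) ^ 2) := by positivity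
      push_cast
      calc ((a:ℝ) * (b:ℝ)) ^ 2 * ((∏ p ∈ a.primeFactors, (1 - 1 / (p : ℝ) ^ 2)) *
              ∏ p ∈ b.primeFactors, (1 - 1 / (p : ℝ) ^ 2))
          = ((a:ℝ)^2 * ∏ p ∈ a.primeFactors, (1 - 1 / (p : ℝ) ^ 2)) *
            ((b:ℝ)^2 * ∏ p ∈ b.primeFactors, (1 - 1 / (p : ℝ) ^ 2)) := by ring
        _ ≤ ((Nat.totient a : ℝ) * (∑ d ∈ a.divisors, (d : ℝ))) *
            ((Nat.totient b : ℝ) * (∑ d ∈ b.divisors, (d : ℝ))) := by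
            apply mul_le_mul h1 h2 (by positivity) (by positivity)
        _ = _ := by ring
  have hprod : (1:ℝ) / 12 ≤ ∏ p ∈ n.primeFactors, (1 - 1 / (p : ℝ) ^ 2) := by
    have hw := weierstrass n.primeFactors (fun p => 1 / (p:ℝ)^2)
      (fun p _ => by positivity)
      (fun p hp => by
        have : 2 ≤ p := (Nat.prime_of_mem_primeFactors hp).two_le
        have : (2:ℝ) ≤ (p:ℝ) := by exact_mod_cast this
        rw [div_le_one (by positivity)]; nlinarith)
    have := primeFactors_sq_sum n
    linarith
  have := key n hn
  have hn2 : (0:ℝ) ≤ (n:ℝ)^2 := by positivity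
  nlinarith

lemma mono_tL {x y t : ℝ} (hy : 0 < y) (hyt : y ≤ t) (hx : 0 < x)
    (hLt : 2 ≤ Real.log (9 * x / t ^ 2)) :
    y * Real.log (9 * x / y ^ 2) ≤ t * Real.log (9 * x / t ^ 2) := by
  have ht : 0 < t := lt_of_lt_of_le hy hyt
  have l1 : Real.log (9 * x / y ^ 2) = Real.log (9 * x) - 2 * Real.log y := by
    rw [Real.log_div (by positivity) (by positivity), Real.log_pow]
    push_cast; ring
  have l2 : Real.log (9 * x / t ^ 2) = Real.log (9 * x) - 2 * Real.log t := by
    rw [Real.log_div (by positivity) (by positivity), Real.log_pow]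
    push_cast; ring
  have l3 : Real.log t - Real.log y = Real.log (t / y) := (Real.log_div ht.ne' hy.ne').symm
  have l4 : Real.log (t / y) ≤ t / y - 1 := Real.log_le_sub_one_of_pos (by positivity)
  have l5 : y * (t / y - 1) = t - y := by field_simp
  have l6 : y * Real.log (t / y) ≤ t - y := by nlinarith [hy]
  have l7 : 0 ≤ Real.log (t / y) := Real.log_nonneg (by rw [le_div_iff₀ hy]; linarith)
  nlinarith [hLt, hyt]

set_option maxHeartbeats 1000000 in
/-- There are constants `C > 0` and `x₀ > 0` such that for every `x ≥ x₀` and every real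
`y` with `3 ≤ y ≤ √x`, one has
`∑_{y < m ≤ √x + 1} 1/(m² · φ(m) · log(9x/m²)) ≤ C/(y² · log(9x/y²))`. -/
theorem sum_middle_range_le :
    ∃ C : ℝ, 0 < C ∧ ∃ x₀ : ℝ, 0 < x₀ ∧ ∀ x : ℝ, x₀ ≤ x → ∀ y : ℝ, 3 ≤ y →
      y ≤ Real.sqrt x →
      (∑' m : ℕ, if y < (m : ℝ) ∧ (m : ℝ) ≤ Real.sqrt x + 1 then
          1 / ((m : ℝ) ^ 2 * (Nat.totient m : ℝ) * Real.log (9 * x / (m : ℝ) ^ 2))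
        else 0)
      ≤ C / (y ^ 2 * Real.log (9 * x / y ^ 2)) := by
  refine ⟨48, by norm_num, 200, by norm_num, ?_⟩
  intro x hx y hy3 hysx
  have hx0 : (0 : ℝ) < x := by linarith
  set s := Real.sqrt x with hs
  have hs0 : 0 < s := Real.sqrt_pos.mpr hx0
  have hs2 : s ^ 2 = x := Real.sq_sqrt hx0.le
  have hs14 : 14 ≤ s := by nlinarith [Real.sqrt_nonneg x]
  have hy0 : (0 : ℝ) < y := by linarith
  -- log lower bound
  have hlog2 : ∀ t : ℝ, 0 < t → t ≤ s + 1 → 2 ≤ Real.log (9 * x / t ^ 2) := by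
    intro t ht hts
    have hexp2 : Real.exp 2 ≤ 7.4 := by
      have h1 : Real.exp 2 = Real.exp 1 * Real.exp 1 := by
        rw [← Real.exp_add]; norm_num
      have h2 := Real.exp_one_lt_d9
      have h3 := Real.exp_pos 1
      nlinarith
    have h74 : (7.4 : ℝ) * t ^ 2 ≤ 9 * x := by nlinarith [hs2, hs14, ht.le, hts]
    have he : Real.exp 2 ≤ 9 * x / t ^ 2 := by
      rw [le_div_iff₀ (by positivity)]
      nlinarith
    calc (2 : ℝ) = Real.log (Real.exp 2) := (Real.log_exp 2).symm
      _ ≤ Real.log (9 * x / t ^ 2) := Real.log_le_log (Real.exp_pos 2) he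
  have hLy2 : 2 ≤ Real.log (9 * x / y ^ 2) := hlog2 y hy0 (by linarith)
  set Ly := Real.log (9 * x / y ^ 2) with hLydef
  have hyLy : 0 < y * Ly := mul_pos hy0 (by linarith)
  set N := ⌊s + 1⌋₊ with hN
  have hNs : s + 1 < (N : ℝ) + 1 := by exact_mod_cast Nat.lt_floor_add_one (s + 1)
  -- reduce tsum to finite sum
  have hzero : ∀ m ∉ Finset.range (N + 1),
      (if y < (m : ℝ) ∧ (m : ℝ) ≤ s + 1 then
        1 / ((m : ℝ) ^ 2 * (Nat.totient m : ℝ) * Real.log (9 * x / (m : ℝ) ^ 2))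
      else 0) = 0 := by
    intro m hm
    rw [if_neg]
    rintro ⟨-, h2⟩
    rw [Finset.mem_range, not_lt] at hm
    have : (N : ℝ) + 1 ≤ (m : ℝ) := by exact_mod_cast hm
    linarith
  rw [tsum_eq_sum hzero]
  -- the double sum bound
  set T := (Finset.range (N + 1)).filter (fun m : ℕ => y < (m : ℝ)) with hT
  have hG : ∑ m ∈ T, ∑ d ∈ m.divisors, 1 / ((d : ℝ) * (m : ℝ) ^ 2) ≤ 4 / y := by
    have hD : ∀ m ∈ T, ∑ d ∈ m.divisors, 1 / ((d : ℝ) * (m : ℝ) ^ 2)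
        = ∑ p ∈ m.divisorsAntidiagonal, 1 / ((p.1 : ℝ) ^ 3 * (p.2 : ℝ) ^ 2) := by
      intro m hm
      rw [hT, Finset.mem_filter] at hm
      have hm0 : m ≠ 0 := by
        intro h
        rw [h] at hm
        simp at hm
        linarith
      rw [Nat.sum_divisorsAntidiagonal (fun d k => 1 / ((d : ℝ) ^ 3 * (k : ℝ) ^ 2))]
      apply Finset.sum_congr rfl
      intro d hd
      obtain ⟨hdvd, -⟩ := Nat.mem_divisors.mp hd
      have hd0 : d ≠ 0 := by rintro rfl; exact hm0 (Nat.eq_zero_of_zero_dvd hdvd)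
      have hcast : ((m / d : ℕ) : ℝ) = (m : ℝ) / (d : ℝ) :=
        Nat.cast_div hdvd (by exact_mod_cast hd0)
      rw [hcast]
      have hdR : (0 : ℝ) < d := by positivity
      have hmR : (0 : ℝ) < m := by
        have : 0 < m := Nat.pos_of_ne_zero hm0
        exact_mod_cast this
      field_simp
    rw [Finset.sum_congr rfl hD]
    have hdisj : (T : Set ℕ).PairwiseDisjoint Nat.divisorsAntidiagonal := by
      intro a _ b _ hab
      simp only [Function.onFun]
      rw [Finset.disjoint_left]
      intro p hpa hpb
      rw [Nat.mem_divisorsAntidiagonal] at hpa hpb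
      exact hab (hpa.1.symm.trans hpb.1)
    rw [← Finset.sum_biUnion hdisj]
    set P := ((Finset.Icc 1 N) ×ˢ (Finset.Icc 1 N)).filter
      (fun p : ℕ × ℕ => y < ((p.1 * p.2 : ℕ) : ℝ)) with hP
    have hBsub : T.biUnion Nat.divisorsAntidiagonal ⊆ P := by
      intro p hp
      rw [Finset.mem_biUnion] at hp
      obtain ⟨m, hmT, hpm⟩ := hp
      rw [Nat.mem_divisorsAntidiagonal] at hpm
      obtain ⟨hprod, hm0⟩ := hpm
      rw [hT, Finset.mem_filter, Finset.mem_range] at hmT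
      rw [hP, Finset.mem_filter, Finset.mem_product, Finset.mem_Icc, Finset.mem_Icc]
      have hp1 : 1 ≤ p.1 := by
        rcases Nat.eq_zero_or_pos p.1 with h | h
        · exfalso; apply hm0; rw [← hprod, h, zero_mul]
        · exact h
      have hp2 : 1 ≤ p.2 := by
        rcases Nat.eq_zero_or_pos p.2 with h | h
        · exfalso; apply hm0; rw [← hprod, h, mul_zero]
        · exact h
      have hp1N : p.1 ≤ N := le_trans (Nat.le_mul_of_pos_right _ hp2) (by omega)
      have hp2N : p.2 ≤ N := le_trans (Nat.le_mul_of_pos_left _ hp1) (by omega)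
      refine ⟨⟨⟨hp1, hp1N⟩, ⟨hp2, hp2N⟩⟩, ?_⟩
      rw [hprod]
      exact hmT.2
    refine le_trans (Finset.sum_le_sum_of_subset_of_nonneg hBsub
      (fun i _ _ => by positivity)) ?_
    -- sum over P
    rw [hP, Finset.sum_filter, Finset.sum_product]
    have hinner : ∀ d ∈ Finset.Icc 1 N,
        (∑ k ∈ Finset.Icc 1 N, if y < ((d * k : ℕ) : ℝ) then
          1 / ((d : ℝ) ^ 3 * (k : ℝ) ^ 2) else 0) ≤ (2 / y) * (1 / (d : ℝ) ^ 2) := by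
      intro d hd
      have hd1 : 1 ≤ d := (Finset.mem_Icc.mp hd).1
      have hdR : (0 : ℝ) < d := by exact_mod_cast hd1
      set K := ⌊y / d⌋₊ with hK
      have hsub2 : (Finset.Icc 1 N).filter (fun k => y < ((d * k : ℕ) : ℝ))
          ⊆ Finset.Icc (K + 1) N := by
        intro k hk
        rw [Finset.mem_filter, Finset.mem_Icc] at hk
        obtain ⟨⟨-, hkN⟩, hyk⟩ := hk
        rw [Finset.mem_Icc]
        refine ⟨?_, hkN⟩
        have : y / d < k := by
          rw [div_lt_iff₀ hdR]
          push_cast at hyk ⊢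
          linarith
        have := (Nat.floor_lt (by positivity)).mpr this
        omega
      rw [← Finset.sum_filter]
      calc ∑ k ∈ (Finset.Icc 1 N).filter (fun k => y < ((d * k : ℕ) : ℝ)),
            1 / ((d : ℝ) ^ 3 * (k : ℝ) ^ 2)
          ≤ ∑ k ∈ Finset.Icc (K + 1) N, 1 / ((d : ℝ) ^ 3 * (k : ℝ) ^ 2) :=
            Finset.sum_le_sum_of_subset_of_nonneg hsub2 (fun i _ _ => by positivity)
        _ = (1 / (d : ℝ) ^ 3) * ∑ k ∈ Finset.Icc (K + 1) N, 1 / (k : ℝ) ^ 2 := by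
            rw [Finset.mul_sum]
            apply Finset.sum_congr rfl
            intro k _
            exact (one_div_mul_one_div _ _).symm
        _ ≤ (1 / (d : ℝ) ^ 3) * (2 / ((K + 1 : ℕ) : ℝ)) := by
            apply mul_le_mul_of_nonneg_left (tail_sq_sum (by omega) N) (by positivity)
        _ ≤ (2 / y) * (1 / (d : ℝ) ^ 2) := by
            push_cast
            have hyK : y / d < (K : ℝ) + 1 := by
              have := Nat.lt_floor_add_one (y / (d:ℝ))
              push_cast at this ⊢
              linarith
            have hK0 : (0 : ℝ) < (K : ℝ) + 1 := by positivity
            rw [div_mul_div_comm, div_mul_div_comm, div_le_div_iff₀ (by positivity) (by positivity)]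
            have : y ≤ d * ((K : ℝ) + 1) := by
              rw [div_lt_iff₀ hdR] at hyK
              nlinarith
            push_cast
            nlinarith [pow_pos hdR 2, pow_pos hdR 3]
    calc (∑ d ∈ Finset.Icc 1 N, ∑ k ∈ Finset.Icc 1 N,
          if y < ((d * k : ℕ) : ℝ) then 1 / ((d : ℝ) ^ 3 * (k : ℝ) ^ 2) else 0)
        ≤ ∑ d ∈ Finset.Icc 1 N, (2 / y) * (1 / (d : ℝ) ^ 2) := Finset.sum_le_sum hinner
      _ = (2 / y) * ∑ d ∈ Finset.Icc 1 N, 1 / (d : ℝ) ^ 2 := by rw [Finset.mul_sum]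
      _ ≤ (2 / y) * 2 := by
          apply mul_le_mul_of_nonneg_left _ (by positivity)
          simpa using tail_sq_sum (le_refl 1) N
      _ = 4 / y := by ring
  -- per-term bound
  have step1 : ∀ m ∈ Finset.range (N + 1),
      (if y < (m : ℝ) ∧ (m : ℝ) ≤ s + 1 then
        1 / ((m : ℝ) ^ 2 * (Nat.totient m : ℝ) * Real.log (9 * x / (m : ℝ) ^ 2))
      else 0)
      ≤ (if y < (m : ℝ) then
          (12 / (y * Ly)) * ∑ d ∈ m.divisors, 1 / ((d : ℝ) * (m : ℝ) ^ 2)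
        else 0) := by
    intro m _
    by_cases hc : y < (m : ℝ) ∧ (m : ℝ) ≤ s + 1
    · rw [if_pos hc, if_pos hc.1]
      obtain ⟨hym, hms⟩ := hc
      have hm0 : (0 : ℝ) < (m : ℝ) := by linarith
      have hm1 : 0 < m := by exact_mod_cast hm0
      have hLm : 2 ≤ Real.log (9 * x / (m : ℝ) ^ 2) := hlog2 m hm0 hms
      set Lm := Real.log (9 * x / (m : ℝ) ^ 2) with hLm'
      have hmono : y * Ly ≤ (m : ℝ) * Lm := mono_tL hy0 hym.le hx0 hLm
      have hφ : (0 : ℝ) < (Nat.totient m : ℝ) := by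
        exact_mod_cast Nat.totient_pos.mpr hm1
      set φ := (Nat.totient m : ℝ) with hφ'
      have hσpos : (0 : ℝ) < ∑ d ∈ m.divisors, (d : ℝ) := by
        apply Finset.sum_pos
        · intro d hd
          have := Nat.pos_of_mem_divisors hd
          exact_mod_cast this
        · exact ⟨1, Nat.one_mem_divisors.mpr hm1.ne'⟩
      set σ := ∑ d ∈ m.divisors, (d : ℝ) with hσ'
      have hflip : ∑ d ∈ m.divisors, 1 / ((d : ℝ) * (m : ℝ) ^ 2) = σ / (m : ℝ) ^ 3 := by
        rw [hσ', ← Nat.sum_div_divisors m (fun d => (d : ℝ)), Finset.sum_div]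
        apply Finset.sum_congr rfl
        intro d hd
        obtain ⟨hdvd, -⟩ := Nat.mem_divisors.mp hd
        have hd0 : d ≠ 0 := by rintro rfl; exact hm1.ne' (Nat.eq_zero_of_zero_dvd hdvd)
        have hcast : ((m / d : ℕ) : ℝ) = (m : ℝ) / (d : ℝ) :=
          Nat.cast_div hdvd (by exact_mod_cast hd0)
        rw [hcast]
        have hdR : (0 : ℝ) < d := by
          have := Nat.pos_of_ne_zero hd0
          exact_mod_cast this
        field_simp
      have hts := totient_sigma_lower m hm1
      rw [hflip]
      rw [div_mul_div_comm, div_le_div_iff₀ (by positivity) (by positivity)]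
      -- goal : 1 * (y * Ly * m^3) ≤ 12 * σ * (m^2 * φ * Lm)
      have h1 : y * Ly * (m : ℝ) ^ 3 ≤ ((m : ℝ) * Lm) * (m : ℝ) ^ 3 :=
        mul_le_mul_of_nonneg_right hmono (by positivity)
      have h2 : (m : ℝ) ^ 2 * ((m : ℝ) ^ 2 * Lm) ≤ (12 * φ * σ) * ((m : ℝ) ^ 2 * Lm) :=
        mul_le_mul_of_nonneg_right hts (by positivity)
      nlinarith [h1, h2]
    · rw [if_neg hc]
      split
      · apply mul_nonneg
        · positivity
        · exact Finset.sum_nonneg (fun d _ => by positivity)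
      · exact le_refl 0
  calc (∑ m ∈ Finset.range (N + 1),
        if y < (m : ℝ) ∧ (m : ℝ) ≤ s + 1 then
          1 / ((m : ℝ) ^ 2 * (Nat.totient m : ℝ) * Real.log (9 * x / (m : ℝ) ^ 2))
        else 0)
      ≤ ∑ m ∈ Finset.range (N + 1), (if y < (m : ℝ) then
          (12 / (y * Ly)) * ∑ d ∈ m.divisors, 1 / ((d : ℝ) * (m : ℝ) ^ 2) else 0) :=
        Finset.sum_le_sum step1
    _ = (12 / (y * Ly)) * ∑ m ∈ T, ∑ d ∈ m.divisors, 1 / ((d : ℝ) * (m : ℝ) ^ 2) := by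
        rw [← Finset.sum_filter, ← hT, Finset.mul_sum]
    _ ≤ (12 / (y * Ly)) * (4 / y) :=
        mul_le_mul_of_nonneg_left hG (by positivity)
    _ = 48 / (y ^ 2 * Ly) := by
        field_simp
        ring
end

section
/- Let G be a finite group and let N be an abelian normal subgroup of G with index [G : N] = 2. Then every irreducible finite-dimensional complex representation of G has dimension at most 2. -/
open Module

/-- A family of pairwise commuting endomorphisms of a nonzero finite-dimensional space over an
algebraically closed field has a common eigenvector. -/
lemma exists_common_eigenvector {K : Type} [Field K] [IsAlgClosed K]
    {M : Type} [iM : AddCommGroup M] [jM : Module K M] [kM : FiniteDimensional K M]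
    [lM : Nontrivial M] {ι : Type} (f : ι → Module.End K M)
    (hcomm : ∀ i j, Commute (f i) (f j)) :
    ∃ v : M, v ≠ 0 ∧ ∀ i, ∃ c : K, f i v = c • v := by
  generalize hn : finrank K M = n
  induction n using Nat.strong_induction_on generalizing M with
  | _ n ih =>
  by_cases hsc : ∀ i, ∃ c : K, f i = (c • 1 : Module.End K M)
  · obtain ⟨v, hv⟩ := exists_ne (0 : M)
    exact ⟨v, hv, fun i => by
      obtain ⟨c, hc⟩ := hsc i
      exact ⟨c, by rw [hc]; simp⟩⟩
  · push_neg at hsc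
    obtain ⟨i₀, hi₀⟩ := hsc
    obtain ⟨μ, hμ⟩ := Module.End.exists_eigenvalue (f i₀)
    set E := (f i₀).eigenspace μ with hE
    have hne_top : E ≠ ⊤ := by
      intro h
      apply hi₀ μ
      ext x
      have hx : x ∈ E := by rw [h]; trivial
      rw [Module.End.mem_eigenspace_iff] at hx
      simpa using hx
    have hmap : ∀ j, Set.MapsTo (f j) E E := by
      intro j x hx
      rw [SetLike.mem_coe, Module.End.mem_eigenspace_iff] at hx ⊢
      rw [← Module.End.mul_apply, hcomm i₀ j, Module.End.mul_apply, hx, map_smul]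
    set g : ι → Module.End K E := fun j => (f j).restrict (fun x hx => hmap j hx) with hg
    have gcomm : ∀ i j, Commute (g i) (g j) := by
      intro i j
      apply LinearMap.ext
      intro x
      apply Subtype.ext
      simp only [Module.End.mul_apply, hg, LinearMap.restrict_coe_apply]
      rw [← Module.End.mul_apply, hcomm i j, Module.End.mul_apply]
    have hEnt : Nontrivial E := Submodule.nontrivial_iff_ne_bot.mpr hμ
    have hlt : finrank K E < n := hn ▸ Submodule.finrank_lt hne_top
    obtain ⟨v, hv0, hv⟩ := ih (finrank K E) hlt g gcomm rfl
    refine ⟨(v : M), by simpa using hv0, fun i => ?_⟩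
    obtain ⟨c, hc⟩ := hv i
    refine ⟨c, ?_⟩
    have := congrArg (Subtype.val) hc
    simpa [hg, LinearMap.restrict_coe_apply, LinearMap.restrict_apply] using this

/-- Restriction of a representation to an invariant submodule. -/
def Representation.subRep {k G M : Type} [CommSemiring k] [Monoid G] [AddCommMonoid M]
    [Module k M] (ρ : Representation k G M) (W : Submodule k M)
    (h : ∀ g, ∀ x ∈ W, ρ g x ∈ W) : Representation k G W where
  toFun g := (ρ g).restrict (fun x hx => h g x hx)
  map_one' := by ext x; simp [LinearMap.restrict_coe_apply]
  map_mul' a b := by ext x; simp [LinearMap.restrict_coe_apply]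

/-- If a finite group `G` has an abelian normal subgroup `N` of index 2, then every
irreducible finite-dimensional complex representation of `G` has dimension at most 2. -/
theorem finrank_le_two_of_abelian_normal_index_two (G : Type) [Group G] [Fintype G]
    (N : Subgroup G) [N.Normal]
    (hab : ∀ a b : G, a ∈ N → b ∈ N → a * b = b * a)
    (hidx : N.index = 2)
    (V : FDRep ℂ G) (hV : CategoryTheory.Simple V) :
    Module.finrank ℂ V ≤ 2 := by
  classical
  haveI := hV
  have hnt : Nontrivial V := by
    by_contra h
    rw [not_nontrivial_iff_subsingleton] at h
    apply CategoryTheory.id_nonzero V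
    ext x
    exact @Subsingleton.elim _ h _ _
  -- common eigenvector for N
  have hcomm : ∀ a b : ↥N, Commute (V.ρ (a : G)) (V.ρ (b : G)) := by
    intro a b
    show _ * _ = _ * _
    rw [← map_mul, ← map_mul, hab a b a.2 b.2]
  obtain ⟨v, hv0, hχ⟩ := exists_common_eigenvector (fun n : ↥N => V.ρ (n : G)) hcomm
  -- pick g ∉ N
  have hNtop : N ≠ ⊤ := by
    intro h
    rw [h, Subgroup.index_top] at hidx
    norm_num at hidx
  obtain ⟨g, hg⟩ : ∃ g, g ∉ N := by
    by_contra h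
    push_neg at h
    exact hNtop (Subgroup.eq_top_iff' N |>.mpr h)
  have hχ' : ∀ n : G, n ∈ N → ∃ c : ℂ, V.ρ n v = c • v := fun n hn => hχ ⟨n, hn⟩
  set w := V.ρ g v with hw
  have hgv : ∀ n : G, n ∈ N → ∃ c : ℂ, V.ρ n w = c • w := by
    intro n hn
    have hconj : g⁻¹ * n * g ∈ N := by
      have := Subgroup.Normal.conj_mem ‹N.Normal› n hn g⁻¹
      simpa using this
    obtain ⟨c, hc⟩ := hχ' _ hconj
    refine ⟨c, ?_⟩
    have hng : n * g = g * (g⁻¹ * n * g) := by group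
    rw [hw, ← Module.End.mul_apply, ← map_mul, hng, map_mul, Module.End.mul_apply, hc, map_smul]
  set W : Submodule ℂ V := Submodule.span ℂ {v, w} with hWdef
  have hvW : v ∈ W := Submodule.subset_span (by simp)
  have hwW : w ∈ W := Submodule.subset_span (by simp)
  have hmaps : ∀ x : G, ∀ u ∈ W, V.ρ x u ∈ W := by
    intro x
    have hle : W.map (V.ρ x) ≤ W := by
      rw [hWdef, Submodule.map_span_le]
      intro m hm
      simp only [Set.mem_insert_iff, Set.mem_singleton_iff] at hm
      rcases hm with hm | hm <;> rw [hm]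
      · by_cases hx : x ∈ N
        · obtain ⟨c, hc⟩ := hχ' x hx
          rw [hc]; exact W.smul_mem _ hvW
        · have hxg : x * g⁻¹ ∈ N := by
            rw [Subgroup.mul_mem_iff_of_index_two hidx]
            simp [hx, hg]
          obtain ⟨c, hc⟩ := hgv _ hxg
          have : V.ρ x v = V.ρ (x * g⁻¹) w := by
            rw [hw, ← Module.End.mul_apply, ← map_mul]
            group
          rw [this, hc]
          exact W.smul_mem _ hwW
      · by_cases hx : x ∈ N
        · obtain ⟨c, hc⟩ := hgv x hx
          rw [hc]; exact W.smul_mem _ hwW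
        · have hxg : x * g ∈ N := by
            rw [Subgroup.mul_mem_iff_of_index_two hidx]
            simp [hx, hg]
          obtain ⟨c, hc⟩ := hχ' _ hxg
          have : V.ρ x w = V.ρ (x * g) v := by
            rw [hw, ← Module.End.mul_apply, ← map_mul]
          rw [this, hc]
          exact W.smul_mem _ hvW
    intro u hu
    exact hle ⟨u, hu, rfl⟩
  -- build the subrepresentation and conclude by simplicity
  let U : FDRep ℂ G := FDRep.of (Representation.subRep V.ρ W hmaps)
  let ι : U ⟶ V := ⟨FGModuleCat.ofHom W.subtype, fun x => by
    ext u
    simp [U, Representation.subRep, LinearMap.restrict_coe_apply]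
    rfl⟩
  haveI : CategoryTheory.Mono ι := by
    apply CategoryTheory.ConcreteCategory.mono_of_injective
    exact Subtype.coe_injective
  have hι0 : ι ≠ 0 := by
    intro h
    apply hv0
    have := congrArg (fun (f : U ⟶ V) => f.hom ⟨v, hvW⟩) h
    exact this
  haveI := CategoryTheory.isIso_of_mono_of_nonzero hι0
  have e : U ≃ₗ[ℂ] V := FDRep.isoToLinearEquiv (CategoryTheory.asIso ι)
  have h1 : finrank ℂ V = finrank ℂ W := (e.symm.finrank_eq)
  rw [h1]
  have : finrank ℂ W ≤ ({v, w} : Set V).toFinset.card := finrank_span_le_card _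
  refine this.trans ?_
  simp only [Set.toFinset_insert, Set.toFinset_singleton]
  exact (Finset.card_insert_le _ _).trans (by simp)
end
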